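/- Let x₁ > 0, let b, d, G : [x₁,∞) → (0,∞) be continuous with y ↦ d(y)/b(y) non-increasing, and let B : [x₁,∞) → [x₁,∞) be differentiable with B(y) ≥ y for all y ≥ x₁. If the function y ↦ ∫_y^{B(y)} b(u)/G(u) du is constant on [x₁,∞), then the function y ↦ ∫_y^{B(y)} d(u)/G(u) du is non-increasing on [x₁,∞). -/

import Mathlib

open MeasureTheory intervalIntegral

/-- Deterministic monotonicity underlying Step 3 of the coupling Lemma 6.10: if
`d/b` is non-increasing, `B(y) ≥ y`, and `y ↦ ∫_y^{B(y)} b/G` is constant on `[x₁,∞)`,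
then `y ↦ ∫_y^{B(y)} d/G` is non-increasing on `[x₁,∞)`. -/
theorem stmt17 (x₁ : ℝ) (hx₁ : 0 < x₁) (b d G B : ℝ → ℝ)
    (hbcont : ContinuousOn b (Set.Ici x₁))
    (hdcont : ContinuousOn d (Set.Ici x₁))
    (hGcont : ContinuousOn G (Set.Ici x₁))
    (hbpos : ∀ y ∈ Set.Ici x₁, 0 < b y)
    (hdpos : ∀ y ∈ Set.Ici x₁, 0 < d y)
    (hGpos : ∀ y ∈ Set.Ici x₁, 0 < G y)
    (hratio : AntitoneOn (fun y => d y / b y) (Set.Ici x₁))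
    (hBdiff : DifferentiableOn ℝ B (Set.Ici x₁))
    (hBge : ∀ y ∈ Set.Ici x₁, y ≤ B y)
    (hconst : ∃ c : ℝ, ∀ y ∈ Set.Ici x₁, (∫ u in y..(B y), b u / G u) = c) :
    AntitoneOn (fun y => ∫ u in y..(B y), d u / G u) (Set.Ici x₁) := by
  obtain ⟨c, hc⟩ := hconst
  have hsub : ∀ a b' : ℝ, x₁ ≤ a → x₁ ≤ b' → Set.uIcc a b' ⊆ Set.Ici x₁ := by
    intro a b' ha hb' u hu
    exact le_trans (le_inf ha hb') hu.1
  have hgcont : ContinuousOn (fun u => b u / G u) (Set.Ici x₁) :=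
    hbcont.div hGcont (fun u hu => (hGpos u hu).ne')
  have hdGcont : ContinuousOn (fun u => d u / G u) (Set.Ici x₁) :=
    hdcont.div hGcont (fun u hu => (hGpos u hu).ne')
  have hgint : ∀ a b' : ℝ, x₁ ≤ a → x₁ ≤ b' →
      IntervalIntegrable (fun u => b u / G u) volume a b' :=
    fun a b' ha hb' => (hgcont.mono (hsub a b' ha hb')).intervalIntegrable
  have hdGint : ∀ a b' : ℝ, x₁ ≤ a → x₁ ≤ b' →
      IntervalIntegrable (fun u => d u / G u) volume a b' :=
    fun a b' ha hb' => (hdGcont.mono (hsub a b' ha hb')).intervalIntegrable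
  have hrw : ∀ u ∈ Set.Ici x₁, d u / G u = (d u / b u) * (b u / G u) := by
    intro u hu
    have hb0 : b u ≠ 0 := (hbpos u hu).ne'
    have hG0 : G u ≠ 0 := (hGpos u hu).ne'
    field_simp
  intro x hx y hy hxy
  simp only []
  have hBx : x₁ ≤ B x := le_trans hx (hBge x hx)
  have hBy : x₁ ≤ B y := le_trans hy (hBge y hy)
  -- key identity
  have hkey : (∫ u in x..y, b u / G u) = ∫ u in (B x)..(B y), b u / G u := by
    have h1 := integral_add_adjacent_intervals (hgint x y hx hy) (hgint y (B y) hy hBy)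
    have h2 := integral_add_adjacent_intervals (hgint x (B x) hx hBx) (hgint (B x) (B y) hBx hBy)
    have e1 := hc x hx
    have e2 := hc y hy
    linarith
  have hBxy : B x ≤ B y := by
    by_contra h
    push_neg at h
    have hpos : 0 < ∫ u in (B y)..(B x), b u / G u :=
      intervalIntegral_pos_of_pos_on (hgint (B y) (B x) hBy hBx)
        (fun u hu => div_pos (hbpos u (le_trans hBy hu.1.le))
          (hGpos u (le_trans hBy hu.1.le))) h
    have hsym : (∫ u in (B y)..(B x), b u / G u) = - ∫ u in (B x)..(B y), b u / G u :=
      integral_symm (B x) (B y)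
    have hnn : 0 ≤ ∫ u in x..y, b u / G u :=
      integral_nonneg hxy (fun u hu => div_nonneg (hbpos u (le_trans hx hu.1)).le
        (hGpos u (le_trans hx hu.1)).le)
    linarith
  rcases le_or_gt (B x) y with hcase | hcase
  · -- disjoint intervals case
    set K := d (B x) / b (B x) with hK
    have step1 : (∫ u in y..(B y), d u / G u) ≤ ∫ u in y..(B y), K * (b u / G u) := by
      apply integral_mono_on (hBge y hy) (hdGint y (B y) hy hBy)
        ((hgint y (B y) hy hBy).const_mul K)
      intro u hu
      have hu1 : x₁ ≤ u := le_trans hy hu.1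
      have hfu : d u / b u ≤ K := hratio hBx hu1 (le_trans hcase hu.1)
      rw [hrw u hu1]
      exact mul_le_mul_of_nonneg_right hfu
        (div_nonneg (hbpos u hu1).le (hGpos u hu1).le)
    have step2 : (∫ u in y..(B y), K * (b u / G u)) = ∫ u in x..(B x), K * (b u / G u) := by
      rw [intervalIntegral.integral_const_mul, intervalIntegral.integral_const_mul, hc x hx, hc y hy]
    have step3 : (∫ u in x..(B x), K * (b u / G u)) ≤ ∫ u in x..(B x), d u / G u := by
      apply integral_mono_on (hBge x hx) ((hgint x (B x) hx hBx).const_mul K)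
        (hdGint x (B x) hx hBx)
      intro u hu
      have hu1 : x₁ ≤ u := le_trans hx hu.1
      have hfu : K ≤ d u / b u := hratio hu1 hBx hu.2
      rw [hrw u hu1]
      exact mul_le_mul_of_nonneg_right hfu
        (div_nonneg (hbpos u hu1).le (hGpos u hu1).le)
    linarith
  · -- overlapping intervals case
    have hyBx : y ≤ B x := hcase.le
    have hA := integral_add_adjacent_intervals (hdGint x y hx hy) (hdGint y (B x) hy hBx)
    have hB2 := integral_add_adjacent_intervals (hdGint y (B x) hy hBx)
      (hdGint (B x) (B y) hBx hBy)
    set K := d y / b y with hK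
    have s1 : (∫ u in (B x)..(B y), d u / G u) ≤ ∫ u in (B x)..(B y), K * (b u / G u) := by
      apply integral_mono_on hBxy (hdGint (B x) (B y) hBx hBy)
        ((hgint (B x) (B y) hBx hBy).const_mul K)
      intro u hu
      have hu1 : x₁ ≤ u := le_trans hBx hu.1
      have hfu : d u / b u ≤ K := hratio hy hu1 (le_trans hyBx hu.1)
      rw [hrw u hu1]
      exact mul_le_mul_of_nonneg_right hfu
        (div_nonneg (hbpos u hu1).le (hGpos u hu1).le)
    have s2 : (∫ u in (B x)..(B y), K * (b u / G u)) = ∫ u in x..y, K * (b u / G u) := by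
      rw [intervalIntegral.integral_const_mul, intervalIntegral.integral_const_mul, hkey]
    have s3 : (∫ u in x..y, K * (b u / G u)) ≤ ∫ u in x..y, d u / G u := by
      apply integral_mono_on hxy ((hgint x y hx hy).const_mul K)
        (hdGint x y hx hy)
      intro u hu
      have hu1 : x₁ ≤ u := le_trans hx hu.1
      have hfu : K ≤ d u / b u := hratio hu1 hy hu.2
      rw [hrw u hu1]
      exact mul_le_mul_of_nonneg_right hfu
        (div_nonneg (hbpos u hu1).le (hGpos u hu1).le)
    linarith
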